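/- Fix n ≥ 1. For an interval s = [a,b] ⊆ [n], define α_s(x) = Σ_{i=a}^{b} x_i and Σ(s) = { x ∈ ℝ^n : α_{[a,b]}(x) = 0, α_{[a,c]}(x) ≥ 0 for all a ≤ c ≤ b, α_{[c,b]}(x) ≤ 0 for all a ≤ c ≤ b }. Suppose s = [a,b] and t = [c,d] are intervals with c ≤ a ≤ d ≤ b, and set u = [a,d]. Then Σ(s) ∩ Σ(t) ⊆ Σ(u). -/

import Mathlib

/-- The linear functional `α_{[a,b]}(x) = ∑_{i ∈ [a,b]} x i`. -/
def alphaI (n : ℕ) (a b : Fin n) (x : Fin n → ℝ) : ℝ :=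
  ∑ i ∈ Finset.Icc a b, x i

/-- The shard `Σ([a,b])`: the cone in the hyperplane `α_{[a,b]} = 0` where all
prefix functionals are nonnegative and all suffix functionals are nonpositive. -/
def shard (n : ℕ) (a b : Fin n) : Set (Fin n → ℝ) :=
  {x | alphaI n a b x = 0 ∧
    (∀ c : Fin n, a ≤ c → c ≤ b → 0 ≤ alphaI n a c x) ∧
    (∀ c : Fin n, a ≤ c → c ≤ b → alphaI n c b x ≤ 0)}

/-- if `s = [a,b]` and `t = [c,d]` with `c ≤ a ≤ d ≤ b` (so that they
are friendly along `u = [a,d]`), then `Σ(s) ∩ Σ(t) ⊆ Σ(u)`. -/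
theorem stmt_11 (n : ℕ) (hn : 1 ≤ n) (a b c d : Fin n)
    (hca : c ≤ a) (had : a ≤ d) (hdb : d ≤ b) :
    shard n a b ∩ shard n c d ⊆ shard n a d := by
  rintro x ⟨⟨_, h2, _⟩, ⟨_, _, h6⟩⟩
  exact ⟨le_antisymm (h6 a hca had) (h2 d had hdb),
    fun e he he' => h2 e he (he'.trans hdb),
    fun e he he' => h6 e (hca.trans he) he'⟩
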